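/- Let S ⊆ {0,1}^n be the set of binary vectors with an even number of ones. Any MICP formulation of S, i.e., convex M ⊆ ℝ^{n+p+d} with S = proj_x(M ∩ (ℝ^{n+p} × ℤ^d)), requires d ≥ n - 1. -/

import Mathlib

theorem stmt_6 (n p d : ℕ)
    (S : Set (Fin n → ℝ))
    (hS : S = {x | (∀ i, x i = 0 ∨ x i = 1) ∧ ∃ k : ℕ, ∑ i, x i = 2 * (k : ℝ)})
    (M : Set ((Fin n → ℝ) × (Fin p → ℝ) × (Fin d → ℝ)))
    (hM : Convex ℝ M)
    (hSM : S = {x | ∃ y z, (x, y, z) ∈ M ∧ ∀ i, ∃ m : ℤ, z i = (m : ℝ)}) :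
    n - 1 ≤ d := by
  rcases Nat.lt_or_ge n 2 with hn | hn
  · omega
  obtain ⟨m, rfl⟩ : ∃ m, n = m + 1 := ⟨n - 1, by omega⟩
  simp only [Nat.add_sub_cancel]
  -- choice of integer points
  have hchoice : ∀ x ∈ S, ∃ (y : Fin p → ℝ) (w : Fin d → ℤ),
      (x, y, fun i => (w i : ℝ)) ∈ M := by
    intro x hx
    rw [hSM] at hx
    obtain ⟨y, z, hzM, hint⟩ := hx
    choose w hw using hint
    exact ⟨y, w, by rwa [show (fun i => (w i : ℝ)) = z from funext fun i => (hw i).symm]⟩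
  choose yf wf hwf using hchoice
  -- key: same parity of integer parts forces equality
  have key : ∀ x, ∀ hx : x ∈ S, ∀ x', ∀ hx' : x' ∈ S,
      (∀ i, ((wf x hx i : ZMod 2)) = (wf x' hx' i : ZMod 2)) → x = x' := by
    intro x hx x' hx' hpar
    have hmid : ((1/2 : ℝ) • (x, yf x hx, fun i => (wf x hx i : ℝ))
        + (1/2 : ℝ) • (x', yf x' hx', fun i => (wf x' hx' i : ℝ))) ∈ M :=
      hM (hwf x hx) (hwf x' hx') (by norm_num) (by norm_num) (by norm_num)
    have hmidS : ((1/2 : ℝ) • x + (1/2 : ℝ) • x') ∈ S := by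
      rw [hSM]
      refine ⟨(1/2 : ℝ) • yf x hx + (1/2 : ℝ) • yf x' hx',
        (1/2 : ℝ) • (fun i => (wf x hx i : ℝ)) + (1/2 : ℝ) • (fun i => (wf x' hx' i : ℝ)),
        hmid, ?_⟩
      intro i
      have hdvd : (2 : ℤ) ∣ (wf x hx i + wf x' hx' i) := by
        have h1 : ((wf x hx i + wf x' hx' i : ℤ) : ZMod 2) = 0 := by
          push_cast
          rw [hpar i]
          ring_nf
          rw [show ((wf x' hx' i : ZMod 2)) * 2 = 0 by
            rw [show (2 : ZMod 2) = 0 from rfl, mul_zero]]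
        exact (ZMod.intCast_zmod_eq_zero_iff_dvd _ 2).mp h1
      obtain ⟨k, hk⟩ := hdvd
      refine ⟨k, ?_⟩
      simp only [Pi.add_apply, Pi.smul_apply, smul_eq_mul]
      have : (wf x hx i : ℝ) + (wf x' hx' i : ℝ) = (2 * k : ℤ) := by
        push_cast [← hk]; ring
      push_cast at this ⊢
      linarith
    rw [hS] at hmidS hx hx'
    funext i
    have h1 := hx.1 i
    have h2 := hx'.1 i
    have h3 := hmidS.1 i
    simp only [Pi.add_apply, Pi.smul_apply, smul_eq_mul] at h3
    rcases h1 with h1 | h1 <;> rcases h2 with h2 | h2 <;>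
      rw [h1, h2] at h3 ⊢ <;> norm_num at h3
  -- the family g : (Fin m → Bool) → S
  set g : (Fin m → Bool) → (Fin (m + 1) → ℝ) := fun v i =>
    if h : (i : ℕ) < m then (if v ⟨i, h⟩ then 1 else 0)
    else (if (Finset.univ.filter (fun j => v j = true)).card % 2 = 1 then 1 else 0)
    with hg
  have hgS : ∀ v, g v ∈ S := by
    intro v
    rw [hS]
    constructor
    · intro i
      simp only [hg]
      split_ifs <;> simp
    · set c := (Finset.univ.filter (fun j => v j = true)).card with hc
      refine ⟨(c + c % 2) / 2, ?_⟩
      rw [Fin.sum_univ_castSucc]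
      have hsum : ∑ i : Fin m, g v i.castSucc = (c : ℝ) := by
        rw [hc]
        rw [Finset.card_filter]
        push_cast
        refine Finset.sum_congr rfl fun i _ => ?_
        simp only [hg, Fin.coe_castSucc]
        rw [dif_pos i.isLt]
      have hlast : g v (Fin.last m) = ((c % 2 : ℕ) : ℝ) := by
        simp only [hg, Fin.val_last]
        rw [dif_neg (lt_irrefl m)]
        rcases Nat.mod_two_eq_zero_or_one c with h | h <;> simp [← hc, h]
      rw [hsum, hlast]
      have : (c : ℕ) + c % 2 = 2 * ((c + c % 2) / 2) := by omega
      exact_mod_cast congrArg (fun t : ℕ => (t : ℝ)) this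
  have hginj : Function.Injective g := by
    intro v v' hvv
    funext i
    have := congrFun hvv (Fin.castSucc i)
    simp only [hg, Fin.coe_castSucc, dif_pos i.isLt, Fin.eta] at this
    split_ifs at this with h1 h2 h2
    · rw [h1, h2]
    · norm_num at this
    · norm_num at this
    · simp only [Bool.not_eq_true] at h1 h2
      rw [h1, h2]
  -- injection into (Fin d → ZMod 2)
  set F : (Fin m → Bool) → (Fin d → ZMod 2) := fun v i => (wf (g v) (hgS v) i : ZMod 2)
    with hF
  have hFinj : Function.Injective F := by
    intro v v' hvv
    apply hginj
    exact key (g v) (hgS v) (g v') (hgS v') (fun i => congrFun hvv i)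
  have hcard := Fintype.card_le_of_injective F hFinj
  simp only [Fintype.card_fun, Fintype.card_fin, Fintype.card_bool,
    ZMod.card] at hcard
  exact (Nat.pow_le_pow_iff_right (by norm_num)).mp hcard
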